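/- Let A, P ∈ ℝ^{n1×n2} with rank(P) ≤ k, and let M ∈ ℝ^{n1×n2} be a best rank-k approximation of A, i.e., rank(M) ≤ k and ‖M − A‖_op ≤ σ_{k+1}(A), the (k+1)-st largest singular value of A (in particular, any k-truncated SVD of A qualifies). Then ‖M − P‖_F ≤ 2√(2k)·‖A − P‖_op. -/

import Mathlib

open Matrix

noncomputable section

/-- Frobenius norm of a real matrix. -/
def frob {m n : Type*} [Fintype m] [Fintype n] (M : Matrix m n ℝ) : ℝ :=
  Real.sqrt (∑ i, ∑ j, (M i j) ^ 2)

/-- ℓ2→ℓ2 operator norm of a real matrix: sup of ‖Mx‖₂ over the ℓ2 unit ball. -/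
def opNorm {m n : Type*} [Fintype m] [Fintype n] (M : Matrix m n ℝ) : ℝ :=
  sSup {t | ∃ x : n → ℝ, ∑ j, (x j) ^ 2 ≤ 1 ∧ t = Real.sqrt (∑ i, (M.mulVec x i) ^ 2)}

/-- `σ_{k+1}(A)`, the (k+1)-st largest singular value of `A`, via the
Eckart–Young–Mirsky characterization: the minimal operator-norm distance from `A`
to matrices of rank at most `k`. -/
def svalSucc {m n : ℕ} (A : Matrix (Fin m) (Fin n) ℝ) (k : ℕ) : ℝ :=
  sInf {t | ∃ N : Matrix (Fin m) (Fin n) ℝ, N.rank ≤ k ∧ t = opNorm (A - N)}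

namespace Stmt6Aux

open scoped RealInnerProductSpace

variable {n1 n2 : ℕ}

def toCLM (X : Matrix (Fin n1) (Fin n2) ℝ) :
    EuclideanSpace ℝ (Fin n2) →L[ℝ] EuclideanSpace ℝ (Fin n1) :=
  LinearMap.toContinuousLinearMap (Matrix.toEuclideanLin X)

lemma toCLM_apply (X : Matrix (Fin n1) (Fin n2) ℝ) (v : EuclideanSpace ℝ (Fin n2)) :
    toCLM X v = (WithLp.equiv 2 (Fin n1 → ℝ)).symm (X *ᵥ (WithLp.equiv 2 (Fin n2 → ℝ)) v) :=
  rfl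

lemma norm_euclidean {n : ℕ} (y : Fin n → ℝ) :
    ‖(WithLp.equiv 2 (Fin n → ℝ)).symm y‖ = Real.sqrt (∑ i, (y i) ^ 2) := by
  rw [EuclideanSpace.norm_eq]
  congr 1
  refine Finset.sum_congr rfl fun i _ => ?_
  rw [Real.norm_eq_abs, sq_abs]
  rfl

lemma opNorm_eq (X : Matrix (Fin n1) (Fin n2) ℝ) : opNorm X = ‖toCLM X‖ := by
  have hset : {t | ∃ x : Fin n2 → ℝ, ∑ j, (x j) ^ 2 ≤ 1 ∧
      t = Real.sqrt (∑ i, (X.mulVec x i) ^ 2)} =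
      (fun x => ‖toCLM X x‖) '' Metric.closedBall 0 1 := by
    ext t
    constructor
    · rintro ⟨x, hx, rfl⟩
      refine ⟨(WithLp.equiv 2 (Fin n2 → ℝ)).symm x, ?_, ?_⟩
      · rw [Metric.mem_closedBall, dist_zero_right, norm_euclidean]
        exact Real.sqrt_le_one.mpr hx
      · show ‖toCLM X _‖ = _
        rw [toCLM_apply, Equiv.apply_symm_apply, norm_euclidean]
    · rintro ⟨y, hy, rfl⟩
      refine ⟨(WithLp.equiv 2 (Fin n2 → ℝ)) y, ?_, ?_⟩
      · have h1 : ‖y‖ ≤ 1 := by rwa [Metric.mem_closedBall, dist_zero_right] at hy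
        have h2 : ‖y‖ = Real.sqrt (∑ j, ((WithLp.equiv 2 (Fin n2 → ℝ)) y j) ^ 2) := by
          rw [← norm_euclidean ((WithLp.equiv 2 (Fin n2 → ℝ)) y), Equiv.symm_apply_apply]
        nlinarith [Real.sq_sqrt (Finset.sum_nonneg (fun j (_: j ∈ Finset.univ) =>
            sq_nonneg ((WithLp.equiv 2 (Fin n2 → ℝ)) y j))),
          Real.sqrt_nonneg (∑ j, ((WithLp.equiv 2 (Fin n2 → ℝ)) y j) ^ 2),
          h2 ▸ h1]
      · show ‖toCLM X _‖ = _
        rw [toCLM_apply, norm_euclidean]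
  rw [opNorm, hset, (toCLM X).sSup_unitClosedBall_eq_norm]

lemma opNorm_nonneg (X : Matrix (Fin n1) (Fin n2) ℝ) : 0 ≤ opNorm X := by
  rw [opNorm_eq]; exact norm_nonneg _

lemma parseval {F : Type*} [NormedAddCommGroup F] [InnerProductSpace ℝ F]
    {ι : Type*} [Fintype ι] (b : OrthonormalBasis ι ℝ F) (y : F) :
    ‖y‖ ^ 2 = ∑ i, ⟪b i, y⟫ ^ 2 := by
  have h := b.sum_inner_mul_inner y y
  rw [real_inner_self_eq_norm_sq] at h
  rw [← h]
  refine Finset.sum_congr rfl fun i _ => ?_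
  rw [real_inner_comm, sq]

lemma hs_sum (f : EuclideanSpace ℝ (Fin n2) →L[ℝ] EuclideanSpace ℝ (Fin n1))
    {ι : Type*} [Fintype ι] (v : OrthonormalBasis ι ℝ (EuclideanSpace ℝ (Fin n2))) :
    ∑ j, ‖f (v j)‖ ^ 2 =
      ∑ i, ‖(ContinuousLinearMap.adjoint f) (EuclideanSpace.basisFun (Fin n1) ℝ i)‖ ^ 2 := by
  calc ∑ j, ‖f (v j)‖ ^ 2
      = ∑ j, ∑ i, ⟪EuclideanSpace.basisFun (Fin n1) ℝ i, f (v j)⟫ ^ 2 :=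
        Finset.sum_congr rfl fun j _ => parseval _ _
    _ = ∑ i, ∑ j, ⟪v j, (ContinuousLinearMap.adjoint f)
          (EuclideanSpace.basisFun (Fin n1) ℝ i)⟫ ^ 2 := by
        rw [Finset.sum_comm]
        refine Finset.sum_congr rfl fun i _ => Finset.sum_congr rfl fun j _ => ?_
        rw [← ContinuousLinearMap.adjoint_inner_left, real_inner_comm]
    _ = ∑ i, ‖(ContinuousLinearMap.adjoint f) (EuclideanSpace.basisFun (Fin n1) ℝ i)‖ ^ 2 :=
        Finset.sum_congr rfl fun i _ => (parseval _ _).symm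

lemma frob_sq (X : Matrix (Fin n1) (Fin n2) ℝ) :
    (∑ i, ∑ j, (X i j) ^ 2) = ∑ j, ‖toCLM X (EuclideanSpace.basisFun (Fin n2) ℝ j)‖ ^ 2 := by
  rw [Finset.sum_comm]
  refine Finset.sum_congr rfl fun j _ => ?_
  have h1 : toCLM X (EuclideanSpace.basisFun (Fin n2) ℝ j) =
      (WithLp.equiv 2 (Fin n1 → ℝ)).symm (X *ᵥ Pi.single j 1) := by
    rw [EuclideanSpace.basisFun_apply]
    show (WithLp.equiv 2 (Fin n1 → ℝ)).symm
        (X *ᵥ (WithLp.equiv 2 (Fin n2 → ℝ)) (EuclideanSpace.single j 1)) = _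
    rw [EuclideanSpace.single]; rfl
  rw [h1, norm_euclidean, Real.sq_sqrt (Finset.sum_nonneg fun i _ => sq_nonneg _)]
  refine Finset.sum_congr rfl fun i _ => ?_
  rw [mulVec_single]
  simp

lemma rank_eq (X : Matrix (Fin n1) (Fin n2) ℝ) :
    X.rank = Module.finrank ℝ (LinearMap.range (Matrix.toEuclideanLin X)) := by
  have h : Matrix.toEuclideanLin X =
      ((WithLp.linearEquiv 2 ℝ (Fin n1 → ℝ)).symm.toLinearMap.comp
        (X.mulVecLin)).comp (WithLp.linearEquiv 2 ℝ (Fin n2 → ℝ)).toLinearMap := rfl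
  rw [h, LinearMap.range_comp_of_range_eq_top _ (LinearEquiv.range _), LinearMap.range_comp,
    LinearEquiv.finrank_map_eq, Matrix.rank]

lemma frob_sq_le (X : Matrix (Fin n1) (Fin n2) ℝ) :
    ∑ j, ‖toCLM X (EuclideanSpace.basisFun (Fin n2) ℝ j)‖ ^ 2 ≤ X.rank * ‖toCLM X‖ ^ 2 := by
  classical
  set K := LinearMap.ker (Matrix.toEuclideanLin X) with hK
  set V : Bool → Submodule ℝ (EuclideanSpace ℝ (Fin n2)) := fun b => cond b K Kᗮ with hV
  have hfam : OrthogonalFamily ℝ (fun b => V b) fun b => (V b).subtypeₗᵢ :=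
    K.orthogonalFamily_self
  have hint : DirectSum.IsInternal V := by
    rw [hfam.isInternal_iff]
    rw [iSup_bool_eq]
    show (K ⊔ Kᗮ)ᗮ = ⊥
    rw [Submodule.sup_orthogonal_of_hasOrthogonalProjection, Submodule.top_orthogonal_eq_bot]
  let b := hint.collectedOrthonormalBasis hfam fun i => stdOrthonormalBasis ℝ (V i)
  have hdim : Module.finrank ℝ (V false) = X.rank := by
    show Module.finrank ℝ Kᗮ = X.rank
    have h1 := Submodule.finrank_add_finrank_orthogonal K
    have h2 := LinearMap.finrank_range_add_finrank_ker (Matrix.toEuclideanLin X)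
    rw [← hK] at h2
    rw [finrank_euclideanSpace_fin] at h1 h2
    rw [rank_eq]; omega
  have key : ∑ j, ‖toCLM X (EuclideanSpace.basisFun (Fin n2) ℝ j)‖ ^ 2 =
      ∑ σ : Σ i : Bool, Fin (Module.finrank ℝ (V i)), ‖toCLM X (b σ)‖ ^ 2 := by
    rw [hs_sum (toCLM X) (EuclideanSpace.basisFun (Fin n2) ℝ), hs_sum (toCLM X) b]
  rw [key]
  rw [← Finset.univ_sigma_univ, Finset.sum_sigma, Fintype.sum_bool]
  have htrue : ∑ a : Fin (Module.finrank ℝ (V true)), ‖toCLM X (b ⟨true, a⟩)‖ ^ 2 = 0 := by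
    refine Finset.sum_eq_zero fun a _ => ?_
    have hmem : b ⟨true, a⟩ ∈ V true :=
      hint.collectedOrthonormalBasis_mem hfam (fun i => stdOrthonormalBasis ℝ (V i)) ⟨true, a⟩
    have : toCLM X (b ⟨true, a⟩) = 0 := hmem
    rw [this, norm_zero]
    ring
  rw [htrue, zero_add]
  have hfalse : ∑ a : Fin (Module.finrank ℝ (V false)), ‖toCLM X (b ⟨false, a⟩)‖ ^ 2 ≤
      (Module.finrank ℝ (V false) : ℝ) * ‖toCLM X‖ ^ 2 := by
    have hterm : ∀ a : Fin (Module.finrank ℝ (V false)),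
        ‖toCLM X (b ⟨false, a⟩)‖ ^ 2 ≤ ‖toCLM X‖ ^ 2 := by
      intro a
      have h1 : ‖toCLM X (b ⟨false, a⟩)‖ ≤ ‖toCLM X‖ * ‖b ⟨false, a⟩‖ :=
        (toCLM X).le_opNorm _
      rw [b.orthonormal.1 ⟨false, a⟩, mul_one] at h1
      exact pow_le_pow_left₀ (norm_nonneg _) h1 2
    calc ∑ a : Fin (Module.finrank ℝ (V false)), ‖toCLM X (b ⟨false, a⟩)‖ ^ 2
        ≤ ∑ _a : Fin (Module.finrank ℝ (V false)), ‖toCLM X‖ ^ 2 :=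
          Finset.sum_le_sum fun a _ => hterm a
      _ = (Module.finrank ℝ (V false) : ℝ) * ‖toCLM X‖ ^ 2 := by
          rw [Finset.sum_const, Finset.card_univ, Fintype.card_fin, nsmul_eq_mul]
  exact hfalse.trans (le_of_eq (by rw [hdim]))

lemma frob_le (X : Matrix (Fin n1) (Fin n2) ℝ) :
    frob X ≤ Real.sqrt X.rank * opNorm X := by
  have h := (frob_sq X) ▸ frob_sq_le X
  rw [frob, opNorm_eq]
  calc Real.sqrt (∑ i, ∑ j, (X i j) ^ 2)
      ≤ Real.sqrt (X.rank * ‖toCLM X‖ ^ 2) := Real.sqrt_le_sqrt h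
    _ = Real.sqrt X.rank * ‖toCLM X‖ := by
        rw [Real.sqrt_mul (Nat.cast_nonneg _), Real.sqrt_sq (norm_nonneg _)]

lemma toCLM_sub_add (A P M : Matrix (Fin n1) (Fin n2) ℝ) :
    toCLM (M - P) = toCLM (M - A) + toCLM (A - P) := by
  have h : M - P = (M - A) + (A - P) := by abel
  rw [h]
  unfold toCLM
  rw [map_add, map_add]

lemma rank_sub_le (M P : Matrix (Fin n1) (Fin n2) ℝ) :
    (M - P).rank ≤ M.rank + P.rank := by
  have hle : LinearMap.range (M - P).mulVecLin ≤
      LinearMap.range M.mulVecLin ⊔ LinearMap.range P.mulVecLin := by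
    rintro _ ⟨x, rfl⟩
    have h : (M - P).mulVecLin x = M.mulVecLin x - P.mulVecLin x := by
      simp [Matrix.mulVecLin_apply, Matrix.sub_mulVec]
    rw [h]
    exact Submodule.sub_mem _ (Submodule.mem_sup_left ⟨x, rfl⟩)
      (Submodule.mem_sup_right ⟨x, rfl⟩)
  have h1 : (M - P).rank ≤ Module.finrank ℝ
      (LinearMap.range M.mulVecLin ⊔ LinearMap.range P.mulVecLin : Submodule ℝ _) :=
    Submodule.finrank_mono hle
  have h2 := Submodule.finrank_sup_add_finrank_inf_eq
    (LinearMap.range M.mulVecLin) (LinearMap.range P.mulVecLin)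
  have h3 : (M - P).rank = Module.finrank ℝ (LinearMap.range (M - P).mulVecLin) := rfl
  have h4 : M.rank = Module.finrank ℝ (LinearMap.range M.mulVecLin) := rfl
  have h5 : P.rank = Module.finrank ℝ (LinearMap.range P.mulVecLin) := rfl
  omega

end Stmt6Aux

open Stmt6Aux in
/-- Lemma 5.1: a best rank-k approximation `M` of `A` (i.e. `rank M ≤ k` and
`‖M − A‖_op ≤ σ_{k+1}(A)`) is close in Frobenius norm to any rank-≤k matrix `P`:
`‖M − P‖_F ≤ 2√(2k)·‖A − P‖_op`. -/
theorem stmt6 (n1 n2 k : ℕ) (A P M : Matrix (Fin n1) (Fin n2) ℝ)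
    (hP : P.rank ≤ k) (hMrank : M.rank ≤ k)
    (hM : opNorm (M - A) ≤ svalSucc A k) :
    frob (M - P) ≤ 2 * Real.sqrt (2 * k) * opNorm (A - P) := by
  have hsval : svalSucc A k ≤ opNorm (A - P) := by
    apply csInf_le
    · refine ⟨0, ?_⟩
      rintro t ⟨N, _, rfl⟩
      exact opNorm_nonneg _
    · exact ⟨P, hP, rfl⟩
  have htri : opNorm (M - P) ≤ opNorm (M - A) + opNorm (A - P) := by
    rw [opNorm_eq, opNorm_eq, opNorm_eq, toCLM_sub_add A P M]
    exact norm_add_le _ _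
  have hop : opNorm (M - P) ≤ 2 * opNorm (A - P) := by
    have := htri.trans (add_le_add_left (hM.trans hsval) _)
    linarith
  have hrank : ((M - P).rank : ℝ) ≤ 2 * k := by
    have := rank_sub_le M P
    have h2k : (M - P).rank ≤ 2 * k := by omega
    exact_mod_cast h2k
  calc frob (M - P) ≤ Real.sqrt ((M - P).rank) * opNorm (M - P) := frob_le _
    _ ≤ Real.sqrt (2 * k) * (2 * opNorm (A - P)) := by
        apply mul_le_mul (Real.sqrt_le_sqrt hrank) hop (opNorm_nonneg _) (Real.sqrt_nonneg _)
    _ = 2 * Real.sqrt (2 * k) * opNorm (A - P) := by ring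

end
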